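/- Let D1 and D2 be strongly connected digraphs with diam(D1) < diam(D2), diameters taken with respect to the maximum distance. Then Per(D1 ⊠ D2) = V(D1) × Per(D2). -/

import Mathlib

/-- A digraph on a vertex type `V`: a set of directed edges (ordered pairs of
distinct vertices), i.e. an irreflexive adjacency relation (no loops, and no
parallel edges since edges form a set). -/
structure Digr (V : Type*) where
  Adj : V → V → Prop
  loopless : ∀ v, ¬ Adj v v

namespace Digr

variable {V : Type*} {W : Type*}

/-- `D.Reaches u v` : there is a directed path (walk) from `u` to `v`. -/
def Reaches (D : Digr V) (u v : V) : Prop :=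
  ∃ (n : ℕ) (f : Fin (n + 1) → V), f 0 = u ∧ f (Fin.last n) = v ∧
    ∀ i : Fin n, D.Adj (f i.castSucc) (f i.succ)

/-- A digraph is strongly connected if every vertex reaches every vertex. -/
def StronglyConnected (D : Digr V) : Prop := ∀ u v : V, D.Reaches u v

/-- The directed distance `→d(u,v)`: the length of a shortest directed
`u`–`v` path. -/
noncomputable def ddist (D : Digr V) (u v : V) : ℕ :=
  sInf {n : ℕ | ∃ f : Fin (n + 1) → V, f 0 = u ∧ f (Fin.last n) = v ∧
    ∀ i : Fin n, D.Adj (f i.castSucc) (f i.succ)}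

/-- The maximum distance `md(u,v) = max {→d(u,v), →d(v,u)}`. -/
noncomputable def mdist (D : Digr V) (u v : V) : ℕ :=
  max (D.ddist u v) (D.ddist v u)

/-- The eccentricity of a vertex with respect to the maximum distance. -/
noncomputable def ecc [Fintype V] (D : Digr V) (u : V) : ℕ :=
  Finset.univ.sup fun v => D.mdist u v

/-- The radius with respect to the maximum distance. -/
noncomputable def rad [Fintype V] [Nonempty V] (D : Digr V) : ℕ :=
  Finset.univ.inf' Finset.univ_nonempty fun v => D.ecc v

/-- The diameter with respect to the maximum distance. -/
noncomputable def diam [Fintype V] (D : Digr V) : ℕ :=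
  Finset.univ.sup fun v => D.ecc v

/-- Out-neighbourhood. -/
def outNbhd (D : Digr V) (v : V) : Set V := {u | D.Adj v u}

/-- In-neighbourhood. -/
def inNbhd (D : Digr V) (v : V) : Set V := {u | D.Adj u v}

/-- Neighbourhood `N(v) = N⁺(v) ∪ N⁻(v)`. -/
def nbhd (D : Digr V) (v : V) : Set V := D.outNbhd v ∪ D.inNbhd v

/-- Closed neighbourhood `N[v] = N(v) ∪ {v}`. -/
def closedNbhd (D : Digr V) (v : V) : Set V := D.nbhd v ∪ {v}

/-- The boundary `∂(D)`. -/
noncomputable def boundary (D : Digr V) : Set V :=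
  {v | ∃ u : V, ∀ w ∈ D.nbhd v, D.mdist u w ≤ D.mdist u v}

/-- The contour `Ct(D)`. -/
noncomputable def contour [Fintype V] (D : Digr V) : Set V :=
  {v | ∀ u ∈ D.nbhd v, D.ecc u ≤ D.ecc v}

/-- The eccentricity set `Ecc(D)`. -/
noncomputable def eccSet [Fintype V] (D : Digr V) : Set V :=
  {v | ∃ u : V, D.ecc u = D.mdist u v}

/-- The periphery `Per(D) = {v : ecc(v) = diam(D)}`. -/
noncomputable def periphery [Fintype V] (D : Digr V) : Set V :=
  {v | D.ecc v = D.diam}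

/-- The strong product of two digraphs. -/
def strongProd (D₁ : Digr V) (D₂ : Digr W) : Digr (V × W) where
  Adj p q :=
    (D₁.Adj p.1 q.1 ∧ p.2 = q.2) ∨ (p.1 = q.1 ∧ D₂.Adj p.2 q.2) ∨
      (D₁.Adj p.1 q.1 ∧ D₂.Adj p.2 q.2)
  loopless := by
    rintro ⟨a, b⟩ (⟨h, -⟩ | ⟨-, h⟩ | ⟨h, -⟩)
    · exact D₁.loopless a h
    · exact D₂.loopless b h
    · exact D₁.loopless a h

end Digr

namespace MyAux
open Digr
variable {V W : Type*}

abbrev Chain (R : V → V → Prop) (u v : V) (n : ℕ) : Prop :=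
  ∃ f : Fin (n + 1) → V, f 0 = u ∧ f (Fin.last n) = v ∧
    ∀ i : Fin n, R (f i.castSucc) (f i.succ)

lemma fcong {n : ℕ} (f : Fin n → V) {i j : Fin n} (h : i.1 = j.1) : f i = f j :=
  congrArg f (Fin.ext h)

lemma chain_zero (R : V → V → Prop) (u : V) : Chain R u u 0 :=
  ⟨fun _ => u, rfl, rfl, fun i => i.elim0⟩

lemma chain_cons {R : V → V → Prop} {u w v : V} {n : ℕ}
    (hR : R u w) (h : Chain R w v n) : Chain R u v (n + 1) := by
  obtain ⟨f, hf0, hfl, hf⟩ := h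
  refine ⟨fun i => if h : i.1 = 0 then u else f ⟨i.1 - 1, by omega⟩, by simp, ?_, ?_⟩
  · simp only [Fin.last]; rw [dif_neg (by omega)]
    rw [← hfl]; exact fcong f (by simp [Fin.last])
  · intro i
    by_cases h0 : i.1 = 0
    · simp only [Fin.coe_castSucc, Fin.val_succ]
      rw [dif_pos h0, dif_neg (by omega)]
      rw [show f ⟨i.1+1-1, by omega⟩ = w from by rw [← hf0]; exact fcong f (by simp [h0])]
      exact hR
    · simp only [Fin.coe_castSucc, Fin.val_succ]
      rw [dif_neg h0, dif_neg (by omega)]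
      have := hf ⟨i.1 - 1, by omega⟩
      rw [fcong f (show (⟨i.1-1, by omega⟩ : Fin n).castSucc.1 = (⟨i.1-1, by omega⟩ : Fin (n+1)).1 by simp),
          fcong f (show (⟨i.1-1, by omega⟩ : Fin n).succ.1 = (⟨i.1+1-1, by omega⟩ : Fin (n+1)).1 by simp; omega)] at this
      exact this

lemma chain_destruct {R : V → V → Prop} {u v : V} {n : ℕ}
    (h : Chain R u v (n + 1)) : ∃ w, R u w ∧ Chain R w v n := by
  obtain ⟨f, hf0, hfl, hf⟩ := h
  refine ⟨f ⟨1, by omega⟩, ?_, fun i => f ⟨i.1 + 1, by omega⟩, rfl, ?_, ?_⟩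
  · have := hf 0
    rw [fcong f (show ((0 : Fin (n+1)).castSucc).1 = (0 : Fin (n+2)).1 by simp), hf0] at this
    rw [fcong f (show (⟨1, by omega⟩ : Fin (n+2)).1 = ((0 : Fin (n+1)).succ).1 by simp)]
    exact this
  · rw [← hfl]; exact fcong f (by simp [Fin.last])
  · intro i
    have := hf ⟨i.1 + 1, by omega⟩
    rw [fcong f (show ((⟨i.1+1, by omega⟩ : Fin (n+1)).castSucc).1 = (⟨i.castSucc.1 + 1, by omega⟩ : Fin (n+2)).1 by simp),
        fcong f (show ((⟨i.1+1, by omega⟩ : Fin (n+1)).succ).1 = (⟨i.succ.1 + 1, by omega⟩ : Fin (n+2)).1 by simp)] at this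
    exact this

lemma chain_map {R : V → V → Prop} {S : W → W → Prop} (g : V → W)
    (hg : ∀ a b, R a b → S (g a) (g b)) {u v : V} {n : ℕ}
    (h : Chain R u v n) : Chain S (g u) (g v) n := by
  obtain ⟨f, hf0, hfl, hf⟩ := h
  exact ⟨g ∘ f, by simp [hf0], by simp [hfl], fun i => hg _ _ (hf i)⟩

lemma lazy_to_walk (D : Digr V) {u v : V} {n : ℕ}
    (h : Chain (fun a b => D.Adj a b ∨ a = b) u v n) :
    ∃ m ≤ n, Chain D.Adj u v m := by
  induction n generalizing u with
  | zero =>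
    obtain ⟨f, hf0, hfl, -⟩ := h
    have : u = v := by rw [← hf0, ← hfl]; exact fcong f rfl
    exact ⟨0, le_refl 0, this ▸ chain_zero _ u⟩
  | succ n ih =>
    obtain ⟨w, hw, hc⟩ := chain_destruct h
    obtain ⟨m, hm, hwalk⟩ := ih hc
    rcases hw with hadj | rfl
    · exact ⟨m + 1, by omega, chain_cons hadj hwalk⟩
    · exact ⟨m, by omega, hwalk⟩

lemma chain_prod {D₁ : Digr V} {D₂ : Digr W} {u u' : V} {v v' : W} {m k : ℕ}
    (h1 : Chain D₁.Adj u u' m) (h2 : Chain D₂.Adj v v' k) :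
    Chain (D₁.strongProd D₂).Adj (u, v) (u', v') (max m k) := by
  obtain ⟨f, hf0, hfl, hf⟩ := h1
  obtain ⟨g, hg0, hgl, hg⟩ := h2
  refine ⟨fun i => (f ⟨min i.1 m, by omega⟩, g ⟨min i.1 k, by omega⟩), ?_, ?_, ?_⟩
  · have e1 : f ⟨min (0 : Fin (max m k + 1)).1 m, by omega⟩ = u := by
      rw [← hf0]; exact fcong f (by simp)
    have e2 : g ⟨min (0 : Fin (max m k + 1)).1 k, by omega⟩ = v := by
      rw [← hg0]; exact fcong g (by simp)
    simp only [e1, e2]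
  · have e1 : f ⟨min (Fin.last (max m k)).1 m, by omega⟩ = u' := by
      rw [← hfl]; exact fcong f (by simp only [Fin.val_last]; omega)
    have e2 : g ⟨min (Fin.last (max m k)).1 k, by omega⟩ = v' := by
      rw [← hgl]; exact fcong g (by simp only [Fin.val_last]; omega)
    simp only [e1, e2]
  · intro i
    show (D₁.Adj _ _ ∧ _ = _) ∨ (_ = _ ∧ D₂.Adj _ _) ∨ (D₁.Adj _ _ ∧ D₂.Adj _ _)
    have hiv : i.castSucc.1 = i.1 := by simp
    have hsv : i.succ.1 = i.1 + 1 := by simp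
    have hV : i.1 < m → D₁.Adj (f ⟨min i.castSucc.1 m, by omega⟩) (f ⟨min i.succ.1 m, by omega⟩) := by
      intro h
      have e1 : f ⟨min i.castSucc.1 m, by omega⟩ = f (Fin.castSucc ⟨i.1, h⟩) :=
        fcong f (by simp only [Fin.coe_castSucc, Fin.val_succ]; omega)
      have e2 : f ⟨min i.succ.1 m, by omega⟩ = f (Fin.succ ⟨i.1, h⟩) :=
        fcong f (by simp only [Fin.coe_castSucc, Fin.val_succ]; omega)
      rw [e1, e2]; exact hf ⟨i.1, h⟩
    have hW : i.1 < k → D₂.Adj (g ⟨min i.castSucc.1 k, by omega⟩) (g ⟨min i.succ.1 k, by omega⟩) := by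
      intro h
      have e1 : g ⟨min i.castSucc.1 k, by omega⟩ = g (Fin.castSucc ⟨i.1, h⟩) :=
        fcong g (by simp only [Fin.coe_castSucc, Fin.val_succ]; omega)
      have e2 : g ⟨min i.succ.1 k, by omega⟩ = g (Fin.succ ⟨i.1, h⟩) :=
        fcong g (by simp only [Fin.coe_castSucc, Fin.val_succ]; omega)
      rw [e1, e2]; exact hg ⟨i.1, h⟩
    have hi : i.1 < max m k := i.2
    by_cases hm : i.1 < m <;> by_cases hk : i.1 < k
    · exact Or.inr (Or.inr ⟨hV hm, hW hk⟩)
    · exact Or.inl ⟨hV hm, fcong g (by simp only [Fin.coe_castSucc, Fin.val_succ]; omega)⟩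
    · exact Or.inr (Or.inl ⟨fcong f (by simp only [Fin.coe_castSucc, Fin.val_succ]; omega), hW hk⟩)
    · omega

lemma adj_prod_fst {D₁ : Digr V} {D₂ : Digr W} {p q : V × W}
    (h : (D₁.strongProd D₂).Adj p q) : D₁.Adj p.1 q.1 ∨ p.1 = q.1 := by
  rcases h with ⟨h, -⟩ | ⟨h, -⟩ | ⟨h, -⟩ <;> [exact Or.inl h; exact Or.inr h; exact Or.inl h]

lemma adj_prod_snd {D₁ : Digr V} {D₂ : Digr W} {p q : V × W}
    (h : (D₁.strongProd D₂).Adj p q) : D₂.Adj p.2 q.2 ∨ p.2 = q.2 := by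
  rcases h with ⟨-, h⟩ | ⟨-, h⟩ | ⟨-, h⟩ <;> [exact Or.inr h; exact Or.inl h; exact Or.inl h]


lemma ddist_le_of_chain {D : Digr V} {u v : V} {n : ℕ} (h : Chain D.Adj u v n) :
    D.ddist u v ≤ n := Nat.sInf_le h

lemma chain_ddist {D : Digr V} {u v : V} (h : D.Reaches u v) :
    Chain D.Adj u v (D.ddist u v) := by
  obtain ⟨n, hf⟩ := h
  have hne : {n | Chain D.Adj u v n}.Nonempty := ⟨n, hf⟩
  exact Nat.sInf_mem hne

lemma ddist_self (D : Digr V) (u : V) : D.ddist u u = 0 :=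
  Nat.le_zero.mp (ddist_le_of_chain (chain_zero _ u))

lemma ddist_strongProd {D₁ : Digr V} {D₂ : Digr W}
    (h₁ : D₁.StronglyConnected) (h₂ : D₂.StronglyConnected) (u u' : V) (v v' : W) :
    (D₁.strongProd D₂).ddist (u, v) (u', v') = max (D₁.ddist u u') (D₂.ddist v v') := by
  have cp := chain_prod (chain_ddist (h₁ u u')) (chain_ddist (h₂ v v'))
  apply le_antisymm
  · exact ddist_le_of_chain cp
  · have hr : (D₁.strongProd D₂).Reaches (u, v) (u', v') := by
      obtain ⟨f, hf⟩ := cp; exact ⟨_, f, hf⟩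
    have cd := chain_ddist hr
    have l1 := lazy_to_walk D₁ (chain_map Prod.fst (fun a b h => adj_prod_fst h) cd)
    have l2 := lazy_to_walk D₂ (chain_map Prod.snd (fun a b h => adj_prod_snd h) cd)
    obtain ⟨m1, hm1, hw1⟩ := l1
    obtain ⟨m2, hm2, hw2⟩ := l2
    have d1 : D₁.ddist u u' ≤ m1 := ddist_le_of_chain hw1
    have d2 : D₂.ddist v v' ≤ m2 := ddist_le_of_chain hw2
    omega

lemma mdist_strongProd {D₁ : Digr V} {D₂ : Digr W}
    (h₁ : D₁.StronglyConnected) (h₂ : D₂.StronglyConnected) (u u' : V) (v v' : W) :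
    (D₁.strongProd D₂).mdist (u, v) (u', v') = max (D₁.mdist u u') (D₂.mdist v v') := by
  simp only [Digr.mdist, ddist_strongProd h₁ h₂]
  omega

lemma ecc_strongProd [Fintype V] [Fintype W] {D₁ : Digr V} {D₂ : Digr W}
    (h₁ : D₁.StronglyConnected) (h₂ : D₂.StronglyConnected) (u : V) (v : W) :
    (D₁.strongProd D₂).ecc (u, v) = max (D₁.ecc u) (D₂.ecc v) := by
  apply le_antisymm
  · apply Finset.sup_le
    rintro ⟨u', v'⟩ -
    rw [mdist_strongProd h₁ h₂]
    exact max_le_max (Finset.le_sup (Finset.mem_univ u')) (Finset.le_sup (Finset.mem_univ v'))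
  · apply max_le
    · apply Finset.sup_le
      intro u' _
      have h : (D₁.strongProd D₂).mdist (u, v) (u', v) ≤ (D₁.strongProd D₂).ecc (u, v) :=
        Finset.le_sup (f := fun p => (D₁.strongProd D₂).mdist (u, v) p) (Finset.mem_univ (u', v))
      rw [mdist_strongProd h₁ h₂] at h
      have h0 : D₂.mdist v v = 0 := by simp [Digr.mdist, ddist_self]
      rw [h0] at h
      simpa using h
    · apply Finset.sup_le
      intro v' _
      have h : (D₁.strongProd D₂).mdist (u, v) (u, v') ≤ (D₁.strongProd D₂).ecc (u, v) :=
        Finset.le_sup (f := fun p => (D₁.strongProd D₂).mdist (u, v) p) (Finset.mem_univ (u, v'))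
      rw [mdist_strongProd h₁ h₂] at h
      have h0 : D₁.mdist u u = 0 := by simp [Digr.mdist, ddist_self]
      rw [h0] at h
      simpa using h

lemma diam_strongProd [Fintype V] [Fintype W] [Nonempty V] [Nonempty W]
    {D₁ : Digr V} {D₂ : Digr W}
    (h₁ : D₁.StronglyConnected) (h₂ : D₂.StronglyConnected) :
    (D₁.strongProd D₂).diam = max D₁.diam D₂.diam := by
  apply le_antisymm
  · apply Finset.sup_le
    rintro ⟨u, v⟩ -
    rw [ecc_strongProd h₁ h₂]
    exact max_le_max (Finset.le_sup (Finset.mem_univ u)) (Finset.le_sup (Finset.mem_univ v))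
  · apply max_le
    · apply Finset.sup_le
      intro u _
      obtain ⟨v⟩ := ‹Nonempty W›
      calc D₁.ecc u ≤ max (D₁.ecc u) (D₂.ecc v) := le_max_left _ _
        _ = (D₁.strongProd D₂).ecc (u, v) := (ecc_strongProd h₁ h₂ u v).symm
        _ ≤ (D₁.strongProd D₂).diam := Finset.le_sup (Finset.mem_univ (u, v))
    · apply Finset.sup_le
      intro v _
      obtain ⟨u⟩ := ‹Nonempty V›
      calc D₂.ecc v ≤ max (D₁.ecc u) (D₂.ecc v) := le_max_right _ _
        _ = (D₁.strongProd D₂).ecc (u, v) := (ecc_strongProd h₁ h₂ u v).symm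
        _ ≤ (D₁.strongProd D₂).diam := Finset.le_sup (Finset.mem_univ (u, v))

end MyAux


/-- if `diam(D₁) < diam(D₂)` then
`Per(D₁ ⊠ D₂) = V(D₁) × Per(D₂)`. -/
theorem periphery_strongProd_of_diam_lt {V W : Type*} [Fintype V] [Fintype W]
    (D₁ : Digr V) (D₂ : Digr W)
    (h₁ : D₁.StronglyConnected) (h₂ : D₂.StronglyConnected)
    (hd : D₁.diam < D₂.diam) :
    (D₁.strongProd D₂).periphery = (Set.univ : Set V) ×ˢ D₂.periphery := by
  rcases isEmpty_or_nonempty V with hV | hV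
  · ext p
    exact (hV.false p.1).elim
  rcases isEmpty_or_nonempty W with hW | hW
  · have : D₂.diam = 0 := by simp [Digr.diam, Finset.univ_eq_empty]
    omega
  ext ⟨u, v⟩
  simp only [Digr.periphery, Set.mem_setOf_eq, Set.mem_prod, Set.mem_univ, true_and]
  rw [MyAux.ecc_strongProd h₁ h₂, MyAux.diam_strongProd h₁ h₂]
  have e1 : D₁.ecc u ≤ D₁.diam := Finset.le_sup (Finset.mem_univ u)
  have e2 : D₂.ecc v ≤ D₂.diam := Finset.le_sup (Finset.mem_univ v)
  omega
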